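/- Let $M = (E, r)$ be a $2$-polymatroid with a partition $(X_1, X_2)$ of $E$ such that $r(X_1) + r(X_2) = r(E) + 1$. Define $M_1$ on ground set $X_1 \cup \{p\}$ (where $p \notin E$) by $r_1(A) = r(A)$ if $p \notin A$ and $r_1(A) = r((A - p) \cup X_2) - r(X_2) + 1$ if $p \in A$, and define $M_2$ on $X_2 \cup \{p\}$ symmetrically. Then $M_1$ and $M_2$ are $2$-polymatroids and $M = P(M_1, M_2) \backslash p$, where $P(M_1, M_2)$ is the parallel connection along $p$. -/

import Mathlib

/-- The rank function of one side of the 2-separation decomposition: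
`r1 A = r A` if `p ∉ A`, and `r1 A = r((A - p) ∪ X2) - r X2 + 1` if `p ∈ A`. -/
def sideRank {α : Type*} [DecidableEq α] (r : Finset α → ℤ) (X2 : Finset α) (p : α) :
    Finset α → ℤ :=
  fun A => if p ∈ A then r ((A \ {p}) ∪ X2) - r X2 + 1 else r A

section Helpers
variable {α : Type*} [DecidableEq α]

lemma rsub' (r : Finset α → ℤ)
    (hmono : ∀ X Y : Finset α, X ⊆ Y → r X ≤ r Y)
    (hsub : ∀ X Y : Finset α, r (X ∪ Y) + r (X ∩ Y) ≤ r X + r Y)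
    (X Y S T : Finset α) (hS : S ⊆ X ∪ Y) (hT : T ⊆ X ∩ Y) :
    r S + r T ≤ r X + r Y := by
  have h1 := hsub X Y
  have h2 := hmono S (X ∪ Y) hS
  have h3 := hmono T (X ∩ Y) hT
  linarith

lemma side_ok (E : Finset α) (r : Finset α → ℤ)
    (hr0 : r ∅ = 0)
    (hmono : ∀ X Y : Finset α, X ⊆ Y → r X ≤ r Y)
    (hsub : ∀ X Y : Finset α, r (X ∪ Y) + r (X ∩ Y) ≤ r X + r Y)
    (hrank2 : ∀ e ∈ E, r {e} ≤ 2)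
    (X1 X2 : Finset α) (hunion : X1 ∪ X2 = E)
    (hsep : r X1 + r X2 = r E + 1)
    (p : α) (hp : p ∉ E) :
    sideRank r X2 p ∅ = 0 ∧
      (∀ A B : Finset α, A ⊆ B → B ⊆ X1 ∪ {p} → sideRank r X2 p A ≤ sideRank r X2 p B) ∧
      (∀ A B : Finset α, A ⊆ X1 ∪ {p} → B ⊆ X1 ∪ {p} →
        sideRank r X2 p (A ∪ B) + sideRank r X2 p (A ∩ B) ≤
          sideRank r X2 p A + sideRank r X2 p B) ∧
      (∀ e ∈ X1 ∪ {p}, sideRank r X2 p {e} ≤ 2) := by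
  have hpX1 : p ∉ X1 := fun h => hp (hunion ▸ Finset.mem_union_left _ h)
  -- key inequality: for A ⊆ X1, r A + r X2 ≤ r (A ∪ X2) + 1
  have hkey : ∀ A : Finset α, A ⊆ X1 → r A + r X2 ≤ r (A ∪ X2) + 1 := by
    intro A hA
    have h := rsub' r hmono hsub X1 (A ∪ X2) E A
      (by rw [← hunion]; intro x hx; simp at hx ⊢; tauto)
      (by intro x hx; simp [hA hx, hx])
    linarith
  refine ⟨by simp [sideRank, hr0], ?_, ?_, ?_⟩
  · -- monotone
    intro A B hAB hB
    by_cases hpB : p ∈ B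
    · by_cases hpA : p ∈ A
      · simp only [sideRank, if_pos hpA, if_pos hpB]
        have := hmono ((A \ {p}) ∪ X2) ((B \ {p}) ∪ X2)
          (Finset.union_subset_union_left (Finset.sdiff_subset_sdiff hAB le_rfl))
        linarith
      · simp only [sideRank, if_neg hpA, if_pos hpB]
        have hA1 : A ⊆ X1 := by
          intro x hx
          have := hB (hAB hx)
          simp at this
          rcases this.symm with h | h
          · exact h
          · exact absurd (h ▸ hx) hpA
        have h1 := hkey A hA1
        have h2 := hmono (A ∪ X2) ((B \ {p}) ∪ X2)
          (Finset.union_subset_union_left (by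
            intro x hx; simp; exact ⟨hAB hx, fun he => hpA (he ▸ hx)⟩))
        linarith
    · have hpA : p ∉ A := fun h => hpB (hAB h)
      simp only [sideRank, if_neg hpA, if_neg hpB]
      exact hmono _ _ hAB
  · -- submodular
    intro A B hA hB
    by_cases hpA : p ∈ A <;> by_cases hpB : p ∈ B
    · have hU : p ∈ A ∪ B := Finset.mem_union_left _ hpA
      have hI : p ∈ A ∩ B := Finset.mem_inter.2 ⟨hpA, hpB⟩
      simp only [sideRank, if_pos hpA, if_pos hpB, if_pos hU, if_pos hI]
      have := rsub' r hmono hsub ((A \ {p}) ∪ X2) ((B \ {p}) ∪ X2)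
        (((A ∪ B) \ {p}) ∪ X2) (((A ∩ B) \ {p}) ∪ X2)
        (by intro x hx; simp at hx ⊢; tauto)
        (by intro x hx; simp at hx ⊢; tauto)
      linarith
    · have hU : p ∈ A ∪ B := Finset.mem_union_left _ hpA
      have hI : p ∉ A ∩ B := fun h => hpB (Finset.mem_inter.1 h).2
      simp only [sideRank, if_pos hpA, if_neg hpB, if_pos hU, if_neg hI]
      have := rsub' r hmono hsub ((A \ {p}) ∪ X2) B
        (((A ∪ B) \ {p}) ∪ X2) (A ∩ B)
        (by intro x hx; simp at hx ⊢; tauto)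
        (by intro x hx; simp at hx ⊢; exact ⟨Or.inl ⟨hx.1, fun he => hpB (he ▸ hx.2)⟩, hx.2⟩)
      linarith
    · have hU : p ∈ A ∪ B := Finset.mem_union_right _ hpB
      have hI : p ∉ A ∩ B := fun h => hpA (Finset.mem_inter.1 h).1
      simp only [sideRank, if_pos hpB, if_neg hpA, if_pos hU, if_neg hI]
      have := rsub' r hmono hsub A ((B \ {p}) ∪ X2)
        (((A ∪ B) \ {p}) ∪ X2) (A ∩ B)
        (by intro x hx; simp at hx ⊢; tauto)
        (by intro x hx; simp at hx ⊢; exact ⟨hx.1, Or.inl ⟨hx.2, fun he => hpA (he ▸ hx.1)⟩⟩)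
      linarith
    · have hU : p ∉ A ∪ B := by simp [hpA, hpB]
      have hI : p ∉ A ∩ B := by simp [hpA]
      simp only [sideRank, if_neg hpA, if_neg hpB, if_neg hU, if_neg hI]
      exact hsub A B
  · -- singleton rank
    intro e he
    simp at he
    rcases he.symm with he | he
    · have hep : p ∉ ({e} : Finset α) := by simp; rintro rfl; exact hpX1 he
      simp only [sideRank, if_neg hep]
      exact hrank2 e (hunion ▸ Finset.mem_union_left _ he)
    · subst he
      simp [sideRank]
end Helpers

/-- A 2-polymatroid whose ground set has a partition (X1, X2) with
r X1 + r X2 = r E + 1 decomposes as a parallel connection P(M1, M2) \ p. -/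
theorem two_separation_decomposition {α : Type*} [DecidableEq α]
    (E : Finset α) (r : Finset α → ℤ)
    (hr0 : r ∅ = 0)
    (hmono : ∀ X Y : Finset α, X ⊆ Y → r X ≤ r Y)
    (hsub : ∀ X Y : Finset α, r (X ∪ Y) + r (X ∩ Y) ≤ r X + r Y)
    (hrank2 : ∀ e ∈ E, r {e} ≤ 2)
    (X1 X2 : Finset α) (hunion : X1 ∪ X2 = E) (hdisj : Disjoint X1 X2)
    (hsep : r X1 + r X2 = r E + 1)
    (p : α) (hp : p ∉ E) :
    (sideRank r X2 p ∅ = 0 ∧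
      (∀ A B : Finset α, A ⊆ B → B ⊆ X1 ∪ {p} → sideRank r X2 p A ≤ sideRank r X2 p B) ∧
      (∀ A B : Finset α, A ⊆ X1 ∪ {p} → B ⊆ X1 ∪ {p} →
        sideRank r X2 p (A ∪ B) + sideRank r X2 p (A ∩ B) ≤
          sideRank r X2 p A + sideRank r X2 p B) ∧
      (∀ e ∈ X1 ∪ {p}, sideRank r X2 p {e} ≤ 2)) ∧
    (sideRank r X1 p ∅ = 0 ∧
      (∀ A B : Finset α, A ⊆ B → B ⊆ X2 ∪ {p} → sideRank r X1 p A ≤ sideRank r X1 p B) ∧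
      (∀ A B : Finset α, A ⊆ X2 ∪ {p} → B ⊆ X2 ∪ {p} →
        sideRank r X1 p (A ∪ B) + sideRank r X1 p (A ∩ B) ≤
          sideRank r X1 p A + sideRank r X1 p B) ∧
      (∀ e ∈ X2 ∪ {p}, sideRank r X1 p {e} ≤ 2)) ∧
    (∀ A ⊆ E,
      min (sideRank r X2 p (A ∩ (X1 ∪ {p})) + sideRank r X1 p (A ∩ (X2 ∪ {p})))
        (sideRank r X2 p ((A ∩ (X1 ∪ {p})) ∪ {p}) +
          sideRank r X1 p ((A ∩ (X2 ∪ {p})) ∪ {p}) - sideRank r X2 p {p})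
        = r A) := by
  have hpX1 : p ∉ X1 := fun h => hp (hunion ▸ Finset.mem_union_left _ h)
  have hpX2 : p ∉ X2 := fun h => hp (hunion ▸ Finset.mem_union_right _ h)
  refine ⟨side_ok E r hr0 hmono hsub hrank2 X1 X2 hunion hsep p hp,
    side_ok E r hr0 hmono hsub hrank2 X2 X1 (by rw [Finset.union_comm]; exact hunion)
      (by linarith) p hp, ?_⟩
  intro A hA
  have hpA : p ∉ A := fun h => hp (hA h)
  have e1 : A ∩ (X1 ∪ {p}) = A ∩ X1 := by
    ext x; simp; intro hx; rintro rfl; exact absurd hx hpA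
  have e2 : A ∩ (X2 ∪ {p}) = A ∩ X2 := by
    ext x; simp; intro hx; rintro rfl; exact absurd hx hpA
  rw [e1, e2]
  have hp1 : p ∉ A ∩ X1 := fun h => hpA (Finset.mem_inter.1 h).1
  have hp2 : p ∉ A ∩ X2 := fun h => hpA (Finset.mem_inter.1 h).1
  have d1 : ((A ∩ X1) ∪ {p}) \ {p} = A ∩ X1 := by
    ext x; simp
    constructor
    · rintro ⟨rfl | h, hne⟩
      · exact absurd rfl hne
      · exact h
    · intro h
      refine ⟨Or.inr h, ?_⟩
      rintro rfl
      exact hp1 (Finset.mem_inter.2 ⟨h.1, h.2⟩)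
  have d2 : ((A ∩ X2) ∪ {p}) \ {p} = A ∩ X2 := by
    ext x; simp
    constructor
    · rintro ⟨rfl | h, hne⟩
      · exact absurd rfl hne
      · exact h
    · intro h
      refine ⟨Or.inr h, ?_⟩
      rintro rfl
      exact hp2 (Finset.mem_inter.2 ⟨h.1, h.2⟩)
  have v1 : sideRank r X2 p (A ∩ X1) = r (A ∩ X1) := if_neg hp1
  have v2 : sideRank r X1 p (A ∩ X2) = r (A ∩ X2) := if_neg hp2
  have hpu1 : p ∈ (A ∩ X1) ∪ {p} := Finset.mem_union_right _ (Finset.mem_singleton_self p)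
  have hpu2 : p ∈ (A ∩ X2) ∪ {p} := Finset.mem_union_right _ (Finset.mem_singleton_self p)
  have v3 : sideRank r X2 p ((A ∩ X1) ∪ {p}) = r ((A ∩ X1) ∪ X2) - r X2 + 1 := by
    simp only [sideRank, if_pos hpu1, d1]
  have v4 : sideRank r X1 p ((A ∩ X2) ∪ {p}) = r ((A ∩ X2) ∪ X1) - r X1 + 1 := by
    simp only [sideRank, if_pos hpu2, d2]
  have v5 : sideRank r X2 p {p} = 1 := by simp [sideRank]
  rw [v1, v2, v3, v4, v5]
  have h1 : r A + r ∅ ≤ r (A ∩ X1) + r (A ∩ X2) := by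
    refine rsub' r hmono hsub _ _ _ _ ?_ (Finset.empty_subset _)
    intro x hx
    have hxE := hA hx
    rw [← hunion] at hxE
    simp at hxE ⊢
    tauto
  have h2 : r E + r A ≤ r ((A ∩ X1) ∪ X2) + r ((A ∩ X2) ∪ X1) := by
    refine rsub' r hmono hsub _ _ _ _ ?_ ?_
    · rw [← hunion]; intro x hx; simp at hx ⊢; tauto
    · intro x hx
      have hxE := hA hx
      rw [← hunion] at hxE
      simp at hxE ⊢
      tauto
  have h3 : r ((A ∩ X1) ∪ X2) + r (A ∩ X2) ≤ r A + r X2 := by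
    refine rsub' r hmono hsub A X2 _ _ ?_ ?_
    · intro x hx; simp at hx ⊢; tauto
    · intro x hx; simp at hx ⊢; tauto
  have h4 : r ((A ∩ X2) ∪ X1) + r (A ∩ X1) ≤ r A + r X1 := by
    refine rsub' r hmono hsub A X1 _ _ ?_ ?_
    · intro x hx; simp at hx ⊢; tauto
    · intro x hx; simp at hx ⊢; tauto
  rw [hr0] at h1
  omega
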